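/- For every integer n ≥ 0 and every pivoting-equivalence class s̄ of complete binary trees with 2n+1 vertices, the integer (2n+2)·H(s̄)·T(s̄) is divisible by 2^{2n+1}. -/

import Mathlib

/-- Binary trees: every vertex has an ordered pair of (possibly empty) subtrees.
`nil` is the empty tree; vertices are the `node` constructors. -/
inductive BTree : Type
  | nil : BTree
  | node : BTree → BTree → BTree
deriving DecidableEq

/-- The number of vertices of a binary tree. -/
def BTree.size : BTree → ℕ
  | .nil => 0
  | .node l r => 1 + l.size + r.size

/-- The product of the hook lengths of all vertices of a binary tree, where the
hook length of a vertex is the number of its descendants (including itself). -/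
def BTree.hookProd : BTree → ℕ
  | .nil => 1
  | .node l r => (BTree.node l r).size * l.hookProd * r.hookProd

/-- A binary tree is complete if for every vertex the two subtrees are either
both empty or both nonempty. -/
inductive BTree.Complete : BTree → Prop
  | nil : BTree.Complete .nil
  | leaf : BTree.Complete (.node .nil .nil)
  | node {l r : BTree} : l ≠ .nil → r ≠ .nil → l.Complete → r.Complete →
      BTree.Complete (.node l r)

/-- A basic pivoting: the exchange of the two subtrees of a non-leaf vertex. -/
inductive BTree.Pivot : BTree → BTree → Prop
  | swap {l r : BTree} : l ≠ .nil → r ≠ .nil → BTree.Pivot (.node l r) (.node r l)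
  | left {l l' : BTree} (r : BTree) : BTree.Pivot l l' →
      BTree.Pivot (.node l r) (.node l' r)
  | right (l : BTree) {r r' : BTree} : BTree.Pivot r r' →
      BTree.Pivot (.node l r) (.node l r')

/-- Two binary trees are pivoting-equivalent if one is obtained from the other by a
finite sequence of basic pivotings. -/
def BTree.PivotEquiv : BTree → BTree → Prop := Relation.ReflTransGen BTree.Pivot

/-- Labelled binary trees: every vertex carries a natural number label. -/
inductive LBTree : Type
  | nil : LBTree
  | node : ℕ → LBTree → LBTree → LBTree

/-- The underlying (unlabelled) shape of a labelled binary tree. -/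
def LBTree.shape : LBTree → BTree
  | .nil => .nil
  | .node _ l r => .node l.shape r.shape

/-- The multiset of labels of a labelled binary tree. -/
def LBTree.labels : LBTree → Multiset ℕ
  | .nil => 0
  | .node a l r => a ::ₘ (l.labels + r.labels)

/-- A labelled binary tree is increasing if the label of each vertex is smaller
than the labels of all its descendants. -/
inductive LBTree.Increasing : LBTree → Prop
  | nil : LBTree.Increasing .nil
  | node {a : ℕ} {l r : LBTree} :
      (∀ b ∈ l.labels, a < b) → (∀ b ∈ r.labels, a < b) →
      l.Increasing → r.Increasing → LBTree.Increasing (.node a l r)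

/-- `lcount s` is the number of increasing labellings of the binary tree `s`
by the labels `{1, …, size s}`. -/
noncomputable def lcount (s : BTree) : ℕ :=
  {l : LBTree | l.shape = s ∧
      l.labels = Multiset.map (· + 1) (Multiset.range s.size) ∧
      l.Increasing}.ncard

/-- `Tbar s` is the total number of increasing labelled binary trees whose shape is
pivoting-equivalent to `s`, i.e. `T(s̄) = ∑_{s' ∈ s̄} #L(s')`. -/
noncomputable def Tbar (s : BTree) : ℕ :=
  ∑ᶠ s' ∈ {s' | BTree.PivotEquiv s s'}, lcount s'


open Nat

def ds (n : ℕ) : ℕ := (Nat.digits 2 n).sum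

lemma fact_val (n : ℕ) : padicValNat 2 (n !) + ds n = n := by
  have h := sub_one_mul_padicValNat_factorial (p := 2) n
  have h2 := Nat.digit_sum_le 2 n
  simp only [ds]; omega

lemma choose_val (n k : ℕ) :
    padicValNat 2 ((n + k).choose k) + ds (n + k) = ds k + ds n := by
  have hfact : (n + k).choose k * k ! * n ! = (n + k)! := by
    have := Nat.choose_mul_factorial_mul_factorial (Nat.le_add_left k n)
    simpa using this
  have hv : padicValNat 2 ((n+k)!) =
      padicValNat 2 ((n + k).choose k) + padicValNat 2 (k !) + padicValNat 2 (n !) := by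
    rw [← hfact, padicValNat.mul (Nat.mul_ne_zero (Nat.choose_pos (Nat.le_add_left k n)).ne'
      (Nat.factorial_ne_zero k)) (Nat.factorial_ne_zero n),
      padicValNat.mul (Nat.choose_pos (Nat.le_add_left k n)).ne' (Nat.factorial_ne_zero k)]

  have := fact_val (n + k)
  have := fact_val n
  have := fact_val k
  omega

lemma succ_val (m : ℕ) : padicValNat 2 (m + 1) + ds (m+1) = ds m + 1 := by
  have h1 : (m+1)! = (m+1) * m ! := rfl
  have hv : padicValNat 2 ((m+1)!) = padicValNat 2 (m+1) + padicValNat 2 (m !) := by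
    rw [h1, padicValNat.mul (Nat.succ_ne_zero m) (Nat.factorial_ne_zero m)]
  have := fact_val (m+1)
  have := fact_val m
  omega

lemma ds_two_mul_add_one (a : ℕ) : ds (2*a+1) = ds a + 1 := by
  unfold ds
  rw [Nat.digits_def' (by norm_num : (1:ℕ) < 2) (by omega),
    show (2*a+1) % 2 = 1 by omega, show (2*a+1) / 2 = a by omega]
  simp [Nat.add_comm]

lemma ds_two_mul (a : ℕ) (ha : a ≠ 0) : ds (2*a) = ds a := by
  unfold ds
  rw [Nat.digits_def' (by norm_num : (1:ℕ) < 2) (by omega),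
    show (2*a) % 2 = 0 by omega, show (2*a) / 2 = a by omega]
  simp

lemma ds_pos (a : ℕ) (ha : a ≠ 0) : 0 < ds a := by
  induction a using Nat.strong_induction_on with
  | _ a ih =>
    unfold ds
    rw [Nat.digits_def' (b := 2) (by norm_num) (by omega)]
    rcases Nat.eq_zero_or_pos (a / 2) with h | h
    · have h1 : a = 1 := by omega
      subst h1; norm_num
    · have := ih (a / 2) (by omega) (by omega)
      unfold ds at this; simp; omega

lemma KEY1 (a b : ℕ) :
    1 + padicValNat 2 (a+1) + padicValNat 2 (b+1) ≤
      padicValNat 2 (a+b+2) + padicValNat 2 ((2*a+2*b+2).choose (2*a+1)) := by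
  have h1 := choose_val (2*b+1) (2*a+1)
  have h2 := choose_val (b+1) (a+1)
  have hds : ds (2*b+1+(2*a+1)) = ds (a+b+1) := by
    rw [show 2*b+1+(2*a+1) = 2*(a+b+1) by ring, ds_two_mul _ (by omega)]
  rw [hds, ds_two_mul_add_one, ds_two_mul_add_one] at h1
  rw [show b+1+(a+1) = a+b+2 by ring] at h2
  have h3 := succ_val a
  have h4 := succ_val b
  have h5 := succ_val (a+b+1)
  rw [show a+b+1+1 = a+b+2 by omega] at h5
  have e3 : (2*a+2*b+2).choose (2*a+1) = (2*b+1 + (2*a+1)).choose (2*a+1) := by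
    congr 1; ring
  rw [e3]
  omega

lemma KEY2 (a : ℕ) : 1 + padicValNat 2 (a+1) ≤ padicValNat 2 ((4*a+2).choose (2*a+1)) := by
  have h1 := choose_val (2*a+1) (2*a+1)
  have hds : ds (2*a+1+(2*a+1)) = ds a + 1 := by
    rw [show 2*a+1+(2*a+1) = 2*(2*a+1) by ring, ds_two_mul _ (by omega), ds_two_mul_add_one]
  rw [hds, ds_two_mul_add_one] at h1
  have h3 := succ_val a
  have h4 := ds_pos (a+1) (by omega)
  have e3 : (4*a+2).choose (2*a+1) = (2*a+1 + (2*a+1)).choose (2*a+1) := by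
    congr 1; ring
  rw [e3]
  omega
deriving instance DecidableEq for LBTree

/-- Recursive count of increasing labellings. -/
def Ncount : BTree → ℕ
  | .nil => 1
  | .node l r => Nat.choose (l.size + r.size) l.size * Ncount l * Ncount r

lemma Ncount_pos (s : BTree) : 0 < Ncount s := by
  induction s with
  | nil => simp [Ncount]
  | node l r ihl ihr =>
    simp only [Ncount]
    exact Nat.mul_pos (Nat.mul_pos (Nat.choose_pos (Nat.le_add_right _ _)) ihl) ihr

lemma LBTree.labels_card (t : LBTree) : Multiset.card t.labels = t.shape.size := by
  induction t with
  | nil => simp [labels, shape, BTree.size]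
  | node a l r ihl ihr => simp [labels, shape, BTree.size, ihl, ihr]; omega

/-- The finset of increasing labelled trees of shape `s` with label set `A`. -/
def treesF : BTree → Finset ℕ → Finset LBTree
  | .nil, A => if A = ∅ then {LBTree.nil} else ∅
  | .node l r, A =>
    if h : A.Nonempty then
      ((A.erase (A.min' h)).powersetCard l.size).biUnion fun S =>
        ((treesF l S) ×ˢ (treesF r ((A.erase (A.min' h)) \ S))).image
          fun p => LBTree.node (A.min' h) p.1 p.2
    else ∅

lemma mem_treesF {s : BTree} : ∀ {A : Finset ℕ} {t : LBTree},
    t ∈ treesF s A ↔ t.shape = s ∧ t.labels = A.val ∧ t.Increasing := by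
  induction s with
  | nil =>
    intro A t
    rw [treesF]
    split_ifs with h
    · subst h
      constructor
      · intro ht
        rw [Finset.mem_singleton] at ht
        subst ht
        exact ⟨rfl, rfl, LBTree.Increasing.nil⟩
      · rintro ⟨h1, h2, h3⟩
        cases t with
        | nil => simp
        | node a l r => simp [LBTree.shape] at h1
    · simp only [Finset.notMem_empty, false_iff]
      rintro ⟨h1, h2, h3⟩
      cases t with
      | nil =>
        exact h (Finset.val_eq_zero.mp (by simpa [LBTree.labels] using h2.symm))
      | node a l r => simp [LBTree.shape] at h1
  | node l r ihl ihr =>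
    intro A t
    rw [treesF]
    split_ifs with h
    · set m := A.min' h with hm
      constructor
      · intro ht
        simp only [Finset.mem_biUnion, Finset.mem_image, Finset.mem_product,
          Finset.mem_powersetCard] at ht
        obtain ⟨S, ⟨hSsub, hScard⟩, p, ⟨hp1, hp2⟩, hpt⟩ := ht
        obtain ⟨hsh1, hlab1, hinc1⟩ := ihl.mp hp1
        obtain ⟨hsh2, hlab2, hinc2⟩ := ihr.mp hp2
        subst hpt
        have hSle : S.val ≤ (A.erase m).val := Finset.val_le_iff.mpr hSsub
        have hSD : S.val + ((A.erase m) \ S).val = (A.erase m).val := by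
          rw [Finset.sdiff_val, add_tsub_cancel_of_le hSle]
        have hmA : m ∈ A := A.min'_mem h
        have hcons : m ::ₘ (A.erase m).val = A.val := by
          rw [Finset.erase_val, Multiset.cons_erase (Finset.mem_def.mp hmA)]
        have hlt : ∀ b ∈ (A.erase m).val, m < b := by
          intro b hb
          rw [← Finset.mem_def, Finset.mem_erase] at hb
          exact lt_of_le_of_ne (A.min'_le b hb.2) (Ne.symm hb.1)
        refine ⟨by simp [LBTree.shape, hsh1, hsh2], ?_, ?_⟩
        · simp only [LBTree.labels, hlab1, hlab2, hSD, hcons]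
        · refine LBTree.Increasing.node ?_ ?_ hinc1 hinc2
          · intro b hb
            rw [hlab1] at hb
            exact hlt b (Multiset.subset_of_le hSle hb)
          · intro b hb
            rw [hlab2] at hb
            refine hlt b ?_
            rw [← hSD]
            exact Multiset.mem_add.mpr (Or.inr hb)
      · rintro ⟨hsh, hlab, hinc⟩
        cases t with
        | nil => simp [LBTree.shape] at hsh
        | node c tl tr =>
          simp only [LBTree.shape, BTree.node.injEq] at hsh
          obtain ⟨hshl, hshr⟩ := hsh
          simp only [LBTree.labels] at hlab
          cases hinc with
          | node h1 h2 il ir =>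
          have hcA : c ∈ A := by
            rw [Finset.mem_def, ← hlab]
            exact Multiset.mem_cons_self _ _
          have hcmin : c = m := by
            refine le_antisymm ?_ (A.min'_le c hcA)
            refine Finset.le_min' _ _ _ ?_
            intro y hy
            rw [Finset.mem_def, ← hlab, Multiset.mem_cons] at hy
            rcases hy with rfl | hy
            · exact le_refl _
            · rcases Multiset.mem_add.mp hy with hy | hy
              · exact le_of_lt (h1 y hy)
              · exact le_of_lt (h2 y hy)
          have hnodupA : A.val.Nodup := A.nodup
          rw [← hlab] at hnodupA
          have hndsum : (tl.labels + tr.labels).Nodup := (Multiset.nodup_cons.mp hnodupA).2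
          have hndl : tl.labels.Nodup := Multiset.nodup_add.mp hndsum |>.1
          have hndr : tr.labels.Nodup := (Multiset.nodup_add.mp hndsum).2.1
          have herase : (A.erase m).val = tl.labels + tr.labels := by
            rw [Finset.erase_val, ← hlab, ← hcmin, Multiset.erase_cons_head]
          set S : Finset ℕ := ⟨tl.labels, hndl⟩ with hS
          have hSsub : S ⊆ A.erase m := by
            rw [← Finset.val_le_iff, herase]
            exact Multiset.le_add_right _ _
          have hD : tr.labels = ((A.erase m) \ S).val := by
            rw [Finset.sdiff_val, herase]
            simp [hS]
          refine Finset.mem_biUnion.mpr ⟨S, Finset.mem_powersetCard.mpr ⟨hSsub, ?_⟩, ?_⟩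
          · show Multiset.card tl.labels = l.size
            rw [tl.labels_card, hshl]
          · refine Finset.mem_image.mpr ⟨(tl, tr), Finset.mem_product.mpr ⟨?_, ?_⟩, ?_⟩
            · exact ihl.mpr ⟨hshl, rfl, il⟩
            · exact ihr.mpr ⟨hshr, hD, ir⟩
            · rw [hcmin]
    · simp only [Finset.notMem_empty, false_iff]
      rintro ⟨hsh, hlab, hinc⟩
      apply h
      have hne : A.val ≠ 0 := by
        rw [← hlab]
        cases t with
        | nil => simp [LBTree.shape] at hsh
        | node a l r => simp [LBTree.labels]
      exact Finset.nonempty_of_ne_empty (fun he => hne (by rw [he]; rfl))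

lemma card_treesF : ∀ (s : BTree) (A : Finset ℕ), A.card = s.size →
    (treesF s A).card = Ncount s := by
  intro s
  induction s with
  | nil =>
    intro A hA
    rw [BTree.size] at hA
    rw [Finset.card_eq_zero] at hA
    simp [treesF, hA, Ncount]
  | node l r ihl ihr =>
    intro A hA
    rw [BTree.size] at hA
    have h : A.Nonempty := Finset.card_pos.mp (by omega)
    rw [treesF, dif_pos h]
    set m := A.min' h with hm
    have hAe : (A.erase m).card = l.size + r.size := by
      rw [Finset.card_erase_of_mem (A.min'_mem h)]
      omega
    rw [Finset.card_biUnion]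
    · have hconst : ∀ S ∈ (A.erase m).powersetCard l.size,
          (((treesF l S) ×ˢ (treesF r ((A.erase m) \ S))).image
            fun p => LBTree.node m p.1 p.2).card = Ncount l * Ncount r := by
        intro S hS
        rw [Finset.mem_powersetCard] at hS
        rw [Finset.card_image_of_injective _ (fun p q hpq => by
          cases p; cases q; simpa [Prod.ext_iff] using hpq)]
        rw [Finset.card_product, ihl S hS.2, ihr _ ?_]
        rw [Finset.card_sdiff_of_subset hS.1, hAe, hS.2]
        omega
      rw [Finset.sum_congr rfl hconst, Finset.sum_const, Finset.card_powersetCard, hAe]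
      simp [Ncount, mul_assoc]
    · intro S hS S' hS' hne
      rw [Function.onFun, Finset.disjoint_left]
      intro t ht ht'
      simp only [Finset.mem_image, Finset.mem_product] at ht ht'
      obtain ⟨p, ⟨hp1, _⟩, hpt⟩ := ht
      obtain ⟨q, ⟨hq1, _⟩, hqt⟩ := ht'
      apply hne
      have hp := (mem_treesF.mp hp1).2.1
      have hq := (mem_treesF.mp hq1).2.1
      rw [← hqt] at hpt
      simp only [LBTree.node.injEq] at hpt
      apply Finset.val_injective
      rw [← hp, ← hq, hpt.2.1]

lemma lcount_eq_Ncount (s : BTree) : lcount s = Ncount s := by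
  set A : Finset ℕ := (Finset.range s.size).map ⟨fun x => x+1, fun a b hab => by simpa using hab⟩ with hA
  have hcard : A.card = s.size := by simp [hA]
  have hval : A.val = Multiset.map (· + 1) (Multiset.range s.size) := by
    rw [hA, Finset.map_val, Finset.range_val]
    rfl
  have hset : {t : LBTree | t.shape = s ∧
      t.labels = Multiset.map (· + 1) (Multiset.range s.size) ∧ t.Increasing}
      = ↑(treesF s A) := by
    ext t
    simp only [Set.mem_setOf_eq, Finset.coe_sort_coe, Finset.mem_coe, mem_treesF, hval]
  rw [lcount, hset, Set.ncard_coe_finset, card_treesF s A hcard]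
namespace BTree

lemma Pivot.ne_nil_left {s t : BTree} (h : Pivot s t) : s ≠ .nil := by
  cases h <;> simp

lemma Pivot.ne_nil_right {s t : BTree} (h : Pivot s t) : t ≠ .nil := by
  cases h <;> simp

lemma Pivot.size_eq {s t : BTree} (h : Pivot s t) : s.size = t.size := by
  induction h with
  | swap hl hr => simp [size]; omega
  | left r hp ih => simp [size]; omega
  | right l hp ih => simp [size]; omega

lemma Pivot.symm {s t : BTree} (h : Pivot s t) : Pivot t s := by
  induction h with
  | swap hl hr => exact Pivot.swap hr hl
  | left r hp ih => exact Pivot.left r ih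
  | right l hp ih => exact Pivot.right l ih

lemma PivotEquiv.refl (s : BTree) : PivotEquiv s s := Relation.ReflTransGen.refl

lemma PivotEquiv.symm {s t : BTree} (h : PivotEquiv s t) : PivotEquiv t s :=
  (@Relation.ReflTransGen.stdSymm BTree BTree.Pivot ⟨fun _ _ hp => hp.symm⟩).symm _ _ h

lemma PivotEquiv.trans {s t u : BTree} (h1 : PivotEquiv s t) (h2 : PivotEquiv t u) :
    PivotEquiv s u := Relation.ReflTransGen.trans h1 h2

lemma PivotEquiv.size_eq {s t : BTree} (h : PivotEquiv s t) : s.size = t.size := by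
  induction h with
  | refl => rfl
  | tail _ hp ih => exact ih.trans hp.size_eq

lemma PivotEquiv.eq_nil {t : BTree} (h : PivotEquiv .nil t) : t = .nil := by
  induction h with
  | refl => rfl
  | tail _ hp ih => subst ih; exact absurd rfl hp.ne_nil_left

lemma PivotEquiv.ne_nil {s t : BTree} (h : PivotEquiv s t) (hs : s ≠ .nil) : t ≠ .nil := by
  intro ht
  subst ht
  exact hs h.symm.eq_nil

lemma PivotEquiv.eq_leaf {t : BTree} (h : PivotEquiv (.node .nil .nil) t) :
    t = .node .nil .nil := by
  induction h with
  | refl => rfl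
  | tail _ hp ih =>
    subst ih
    cases hp with
    | swap hl hr => exact absurd rfl hl
    | left r hp => exact absurd rfl hp.ne_nil_left
    | right l hp => exact absurd rfl hp.ne_nil_left

lemma Pivot.complete {s t : BTree} (h : Pivot s t) (hs : s.Complete) : t.Complete := by
  induction h with
  | swap hl hr =>
    cases hs with
    | leaf => exact absurd rfl hl
    | node hl' hr' cl cr => exact Complete.node hr hl cr cl
  | left r hp ih =>
    cases hs with
    | leaf => exact absurd rfl hp.ne_nil_left
    | node hl' hr' cl cr => exact Complete.node hp.ne_nil_right hr' (ih cl) cr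
  | right l hp ih =>
    cases hs with
    | leaf => exact absurd rfl hp.ne_nil_left
    | node hl' hr' cl cr => exact Complete.node hl' hp.ne_nil_right cl (ih cr)

lemma PivotEquiv.complete {s t : BTree} (h : PivotEquiv s t) (hs : s.Complete) :
    t.Complete := by
  induction h with
  | refl => exact hs
  | tail _ hp ih => exact hp.complete ih

end BTree

lemma Ncount_pivot {s t : BTree} (h : BTree.Pivot s t) : Ncount s = Ncount t := by
  induction h with
  | swap hl hr =>
    rename_i l r
    simp only [Ncount]
    have h1 : (r.size + l.size).choose r.size = (l.size + r.size).choose l.size := by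
      rw [Nat.add_comm r.size l.size, ← Nat.choose_symm (Nat.le_add_right l.size r.size)]
      congr 1
      omega
    rw [h1]; ring
  | left r hp ih =>
    rename_i l l'
    simp only [Ncount, hp.size_eq, ih]
  | right l hp ih =>
    rename_i r r'
    simp only [Ncount, hp.size_eq, ih]

lemma Ncount_equiv {s t : BTree} (h : BTree.PivotEquiv s t) : Ncount s = Ncount t := by
  induction h with
  | refl => rfl
  | tail _ hp ih => exact ih.trans (Ncount_pivot hp)

lemma PivotEquiv_node_left {l l' : BTree} (r : BTree) (h : BTree.PivotEquiv l l') :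
    BTree.PivotEquiv (.node l r) (.node l' r) :=
  Relation.ReflTransGen.lift (fun x => BTree.node x r) (fun _ _ hp => BTree.Pivot.left r hp) _ _ h

lemma PivotEquiv_node_right (l : BTree) {r r' : BTree} (h : BTree.PivotEquiv r r') :
    BTree.PivotEquiv (.node l r) (.node l r') :=
  Relation.ReflTransGen.lift (fun x => BTree.node l x) (fun _ _ hp => BTree.Pivot.right l hp) _ _ h

/-- The pivoting-equivalence class of a tree. -/
def cls (s : BTree) : Set BTree := {s' | BTree.PivotEquiv s s'}

lemma cls_eq_of_equiv {s t : BTree} (h : BTree.PivotEquiv s t) : cls s = cls t := by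
  ext u
  exact ⟨fun hu => h.symm.trans hu, fun hu => h.trans hu⟩

lemma classEq {l r : BTree} (hl : l ≠ .nil) (hr : r ≠ .nil) :
    cls (.node l r) =
    (fun p : BTree × BTree => BTree.node p.1 p.2) ''
      ((cls l ×ˢ cls r) ∪ (cls r ×ˢ cls l)) := by
  ext t
  constructor
  · intro h
    induction h with
    | refl => exact ⟨(l, r), Or.inl ⟨BTree.PivotEquiv.refl l, BTree.PivotEquiv.refl r⟩, rfl⟩
    | tail hab step ih =>
      obtain ⟨⟨x, y⟩, hxy, rfl⟩ := ih
      cases step with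
      | swap hx hy =>
        refine ⟨(y, x), ?_, rfl⟩
        rcases hxy with ⟨h1, h2⟩ | ⟨h1, h2⟩
        · exact Or.inr ⟨h2, h1⟩
        · exact Or.inl ⟨h2, h1⟩
      | left r0 hp =>
        rename_i x'
        refine ⟨(x', y), ?_, rfl⟩
        rcases hxy with ⟨h1, h2⟩ | ⟨h1, h2⟩
        · exact Or.inl ⟨h1.tail hp, h2⟩
        · exact Or.inr ⟨h1.tail hp, h2⟩
      | right l0 hp =>
        rename_i y'
        refine ⟨(x, y'), ?_, rfl⟩
        rcases hxy with ⟨h1, h2⟩ | ⟨h1, h2⟩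
        · exact Or.inl ⟨h1, h2.tail hp⟩
        · exact Or.inr ⟨h1, h2.tail hp⟩
  · rintro ⟨⟨x, y⟩, hxy, rfl⟩
    rcases hxy with ⟨h1, h2⟩ | ⟨h1, h2⟩
    · exact (PivotEquiv_node_left r h1).trans (PivotEquiv_node_right x h2)
    · refine ((PivotEquiv_node_left r h2).trans (PivotEquiv_node_right y h1)).tail ?_
      exact BTree.Pivot.swap (h2.ne_nil hl) (h1.ne_nil hr)

lemma cls_nil : cls BTree.nil = {BTree.nil} := by
  ext t
  constructor
  · exact fun h => h.eq_nil
  · intro h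
    rw [Set.mem_singleton_iff] at h
    subst h
    exact BTree.PivotEquiv.refl _

lemma cls_leaf : cls (BTree.node .nil .nil) = {BTree.node .nil .nil} := by
  ext t
  constructor
  · exact fun h => h.eq_leaf
  · intro h
    rw [Set.mem_singleton_iff] at h
    subst h
    exact BTree.PivotEquiv.refl _

lemma cls_finite {s : BTree} (hs : s.Complete) : (cls s).Finite := by
  induction hs with
  | nil => rw [cls_nil]; exact Set.finite_singleton _
  | leaf => rw [cls_leaf]; exact Set.finite_singleton _
  | node hl hr cl cr ihl ihr =>
    rw [classEq hl hr]
    exact (((ihl.prod ihr).union (ihr.prod ihl)).image _)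

/-- The number of trees in the pivoting-equivalence class. -/
noncomputable def Kc (s : BTree) : ℕ := (cls s).ncard

lemma Kc_pos {s : BTree} (hs : s.Complete) : 0 < Kc s :=
  Set.ncard_pos (cls_finite hs) |>.mpr ⟨s, BTree.PivotEquiv.refl s⟩

lemma Kc_eq_of_equiv {s t : BTree} (h : BTree.PivotEquiv s t) : Kc s = Kc t := by
  rw [Kc, Kc, cls_eq_of_equiv h]

lemma node_pair_injective :
    Function.Injective (fun p : BTree × BTree => BTree.node p.1 p.2) := by
  rintro ⟨a, b⟩ ⟨c, d⟩ h
  simpa [Prod.ext_iff] using h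

lemma ncard_set_prod {s t : Set BTree} (hs : s.Finite) (ht : t.Finite) :
    (s ×ˢ t).ncard = s.ncard * t.ncard := by
  classical
  rw [Set.ncard_eq_toFinset_card _ (hs.prod ht), ← Set.Finite.toFinset_prod hs ht,
    Finset.card_product, Set.ncard_eq_toFinset_card _ hs, Set.ncard_eq_toFinset_card _ ht]

lemma Kc_node_of_not_equiv {l r : BTree} (hl : l.Complete) (hr : r.Complete)
    (hln : l ≠ .nil) (hrn : r ≠ .nil) (h : ¬ BTree.PivotEquiv l r) :
    Kc (.node l r) = 2 * (Kc l * Kc r) := by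
  have hfl := cls_finite hl
  have hfr := cls_finite hr
  have hdisj : Disjoint (cls l ×ˢ cls r) (cls r ×ˢ cls l) := by
    rw [Set.disjoint_left]
    rintro ⟨x, y⟩ ⟨hx1, _⟩ ⟨hx2, _⟩
    exact h (hx1.trans hx2.symm)
  rw [Kc, classEq hln hrn, Set.ncard_image_of_injective _ node_pair_injective,
    Set.ncard_union_eq hdisj (hfl.prod hfr) (hfr.prod hfl),
    ncard_set_prod hfl hfr, ncard_set_prod hfr hfl]
  rw [Kc, Kc]
  ring

lemma Kc_node_of_equiv {l r : BTree} (hl : l.Complete) (hr : r.Complete)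
    (hln : l ≠ .nil) (hrn : r ≠ .nil) (h : BTree.PivotEquiv l r) :
    Kc (.node l r) = Kc l * Kc r := by
  have hfl := cls_finite hl
  have hcc : cls r = cls l := (cls_eq_of_equiv h).symm
  rw [Kc, classEq hln hrn, hcc, Set.union_self,
    Set.ncard_image_of_injective _ node_pair_injective,
    ncard_set_prod hfl hfl, Kc, Kc, hcc]

lemma Tbar_eq {s : BTree} (hs : s.Complete) : Tbar s = Ncount s * Kc s := by
  classical
  have hfin := cls_finite hs
  have hcongr : ∀ s' ∈ cls s, lcount s' = Ncount s := by
    intro s' hs'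
    rw [lcount_eq_Ncount, ← Ncount_equiv hs']
  rw [Tbar]
  rw [show {s' | BTree.PivotEquiv s s'} = cls s from rfl]
  rw [finsum_mem_congr rfl hcongr]
  rw [← Set.Finite.coe_toFinset hfin, finsum_mem_coe_finset, Finset.sum_const,
    smul_eq_mul, mul_comm]
  rw [Kc, Set.ncard_eq_toFinset_card _ hfin]
lemma complete_size_odd {s : BTree} (hs : s.Complete) (hn : s ≠ .nil) :
    ∃ k, s.size = 2 * k + 1 := by
  induction hs with
  | nil => exact absurd rfl hn
  | leaf => exact ⟨0, rfl⟩
  | node hl hr cl cr ihl ihr =>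
    obtain ⟨a, ha⟩ := ihl hl
    obtain ⟨b, hb⟩ := ihr hr
    exact ⟨a + b + 1, by simp [BTree.size, ha, hb]; omega⟩

lemma v2mul (x y : ℕ) (hx : x ≠ 0) (hy : y ≠ 0) :
    padicValNat 2 (x * y) = padicValNat 2 x + padicValNat 2 y :=
  padicValNat.mul hx hy

lemma main_dvd {s : BTree} (hs : s.Complete) :
    ∀ n, s.size = 2 * n + 1 → 2 ^ (2 * n) ∣ (n + 1) * (Ncount s * Kc s) := by
  induction hs with
  | nil => intro n h; simp [BTree.size] at h
  | leaf =>
    intro n h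
    have hn : n = 0 := by simp [BTree.size] at h; omega
    subst hn
    simp
  | node hln hrn cl cr ihl ihr =>
    rename_i l r
    intro n hsz
    obtain ⟨a, ha⟩ := complete_size_odd cl hln
    obtain ⟨b, hb⟩ := complete_size_odd cr hrn
    have hn : n = a + b + 1 := by simp [BTree.size, ha, hb] at hsz; omega
    have hNl := (Ncount_pos l).ne'
    have hNr := (Ncount_pos r).ne'
    have hKl := (Kc_pos cl).ne'
    have hKr := (Kc_pos cr).ne'
    have hul : 2 ^ (2 * a) ∣ (a + 1) * (Ncount l * Kc l) := ihl a ha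
    have hur : 2 ^ (2 * b) ∣ (b + 1) * (Ncount r * Kc r) := ihr b hb
    have hvul : 2 * a ≤ padicValNat 2 ((a + 1) * (Ncount l * Kc l)) :=
      (padicValNat_dvd_iff_le (mul_ne_zero (by omega) (mul_ne_zero hNl hKl))).mp hul
    have hvur : 2 * b ≤ padicValNat 2 ((b + 1) * (Ncount r * Kc r)) :=
      (padicValNat_dvd_iff_le (mul_ne_zero (by omega) (mul_ne_zero hNr hKr))).mp hur
    rw [v2mul _ _ (by omega) (mul_ne_zero hNl hKl), v2mul _ _ hNl hKl] at hvul
    rw [v2mul _ _ (by omega) (mul_ne_zero hNr hKr), v2mul _ _ hNr hKr] at hvur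
    have hNnode : Ncount (.node l r) = (2*a+2*b+2).choose (2*a+1) * Ncount l * Ncount r := by
      simp only [Ncount, ha, hb, show 2*a+1+(2*b+1) = 2*a+2*b+2 from by omega]
    have hC : (2*a+2*b+2).choose (2*a+1) ≠ 0 := (Nat.choose_pos (by omega)).ne'
    by_cases hlr : BTree.PivotEquiv l r
    · -- symmetric case : classes equal
      have hab : a = b := by
        have := hlr.size_eq
        rw [ha, hb] at this
        omega
      subst hab
      have hKnode : Kc (.node l r) = Kc l * Kc r := Kc_node_of_equiv cl cr hln hrn hlr
      have hNrl : Ncount r = Ncount l := (Ncount_equiv hlr).symm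
      have hKrl : Kc r = Kc l := (Kc_eq_of_equiv hlr).symm
      have hX : (n + 1) * (Ncount (.node l r) * Kc (.node l r)) =
          (2 * (a+1)) * ((4*a+2).choose (2*a+1) * (Ncount l * (Ncount l * (Kc l * Kc l)))) := by
        rw [hNnode, hKnode, hNrl, hKrl, hn]
        rw [show (2*a+2*a+2).choose (2*a+1) = (4*a+2).choose (2*a+1) by congr 1; omega]
        ring
      rw [padicValNat_dvd_iff_le (by
        refine mul_ne_zero (by omega) (mul_ne_zero (Ncount_pos _).ne' (Kc_pos ?_).ne')
        exact BTree.Complete.node hln hrn cl cr), hX]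
      rw [v2mul _ _ (by omega)
          (mul_ne_zero (Nat.choose_pos (by omega)).ne'
            (mul_ne_zero hNl (mul_ne_zero hNl (mul_ne_zero hKl hKl)))),
        v2mul _ _ (by omega) (by omega),
        v2mul _ _ (Nat.choose_pos (by omega)).ne'
          (mul_ne_zero hNl (mul_ne_zero hNl (mul_ne_zero hKl hKl))),
        v2mul _ _ hNl (mul_ne_zero hNl (mul_ne_zero hKl hKl)),
        v2mul _ _ hNl (mul_ne_zero hKl hKl),
        v2mul _ _ hKl hKl, padicValNat.self (by norm_num)]
      have hk2 := KEY2 a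
      omega
    · have hKnode : Kc (.node l r) = 2 * (Kc l * Kc r) :=
        Kc_node_of_not_equiv cl cr hln hrn hlr
      have hX : (n + 1) * (Ncount (.node l r) * Kc (.node l r)) =
          (a+b+2) * ((2*a+2*b+2).choose (2*a+1) *
            (2 * (Ncount l * (Ncount r * (Kc l * Kc r))))) := by
        rw [hNnode, hKnode, hn]
        ring
      rw [padicValNat_dvd_iff_le (by
        refine mul_ne_zero (by omega) (mul_ne_zero (Ncount_pos _).ne' (Kc_pos ?_).ne')
        exact BTree.Complete.node hln hrn cl cr), hX]
      rw [v2mul _ _ (by omega)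
          (mul_ne_zero hC (mul_ne_zero (by norm_num)
            (mul_ne_zero hNl (mul_ne_zero hNr (mul_ne_zero hKl hKr))))),
        v2mul _ _ hC (mul_ne_zero (by norm_num)
          (mul_ne_zero hNl (mul_ne_zero hNr (mul_ne_zero hKl hKr)))),
        v2mul _ _ (by norm_num) (mul_ne_zero hNl (mul_ne_zero hNr (mul_ne_zero hKl hKr))),
        v2mul _ _ hNl (mul_ne_zero hNr (mul_ne_zero hKl hKr)),
        v2mul _ _ hNr (mul_ne_zero hKl hKr), v2mul _ _ hKl hKr,
        padicValNat.self (by norm_num)]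
      have hk1 := KEY1 a b
      omega

/-- For every pivoting-equivalence class `s̄` of complete binary trees with `2n+1`
vertices, `(2n+2) * H(s̄) * T(s̄)` is divisible by `2 ^ (2n+1)`. -/
theorem genocchi_class_divisibility' (n : ℕ) (s : BTree)
    (hs : s.Complete) (hsize : s.size = 2 * n + 1) :
    2 ^ (2 * n + 1) ∣ (2 * n + 2) * s.hookProd * Tbar s := by
  have h1 := main_dvd hs n hsize
  rw [Tbar_eq hs]
  have h2 := mul_dvd_mul (dvd_mul_right 2 s.hookProd) h1
  convert h2 using 1
  · rfl
  · ring
  · ring
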